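/- There exists an integer k_0 such that for all k ≥ k_0 the following holds. Let y ∈ [0,1), u0 = y·2^{−k}, let γ0, η0 ∈ (0,1) satisfy the defining equations, and set ε0 = 1 − γ0². Then: 2(1−y)/(2^k − k − 1) − 4k(1−y)²/2^{2k} ≤ ε0 ≤ 2(1−y)/(2^k − k − 1), and η0 ≤ min{ y, y − (k+1)(1−y)/(2^k − k − 1) + 4k(1−y)²/2^k }. -/
import Mathlib

open Real

lemma bern_aux (t : ℝ) (ht0 : 0 ≤ t) (ht1 : t ≤ 1) (n : ℕ) :
    (1 - t) ^ n * (1 + n * t) ≤ 1 := by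
  induction n with
  | zero => norm_num
  | succ n ih =>
    have h1 : (0:ℝ) ≤ 1 - t := by linarith
    have h2 : (0:ℝ) ≤ (1-t)^n := pow_nonneg h1 n
    have key : (1-t) * (1 + ((n:ℝ)+1) * t) ≤ 1 + (n:ℝ) * t := by
      nlinarith [sq_nonneg t, mul_nonneg (Nat.cast_nonneg n : (0:ℝ) ≤ n) (sq_nonneg t)]
    calc (1-t)^(n+1) * (1 + ((n+1:ℕ):ℝ) * t)
        = (1-t)^n * ((1-t) * (1 + ((n:ℝ)+1) * t)) := by push_cast; ring
      _ ≤ (1-t)^n * (1 + (n:ℝ)*t) := mul_le_mul_of_nonneg_left key h2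
      _ ≤ 1 := ih

lemma pow_big (m : ℕ) (hm : 15 ≤ m) : 4 * (m+2)^2 ≤ 2^(m+1) := by
  induction m with
  | zero => omega
  | succ n ih =>
    rcases Nat.lt_or_ge n 15 with h | h
    · have hn : n = 14 := by omega
      subst hn; norm_num
    · have h1 := ih h
      have h2 : 4*(n+3)^2 ≤ 2*(4*(n+2)^2) := by nlinarith
      calc 4*(n+1+2)^2 = 4*(n+3)^2 := by ring
        _ ≤ 2*(4*(n+2)^2) := h2
        _ ≤ 2*2^(n+1) := by omega
        _ = 2^(n+1+1) := by rw [pow_succ]; ring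

lemma crude_ub (m x y ε P S : ℝ) (hm : 15 ≤ m) (hε0 : 0 < ε)
    (hy0 : 0 ≤ y) (hy1 : y < 1) (hx : x = 1 - y)
    (hnum : 4*(m+2)^2 ≤ P)
    (hSdef : S = ε*(P - 2*y) + 2*y) (hSub : S ≤ 2 + 2*m*ε) :
    ε*P ≤ 4*x := by
  have h2 : ε*y ≤ ε := by
    have := mul_nonneg hε0.le (by linarith : (0:ℝ) ≤ 1 - y)
    nlinarith [this]
  have h3 : 0 ≤ ε*(P - 4 - 4*m) :=
    mul_nonneg hε0.le (by nlinarith [sq_nonneg m])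
  linarith [hSub, h2, h3]

lemma main_ub (m x y ε P S : ℝ) (hm : 15 ≤ m) (hε0 : 0 < ε) (hε1 : ε < 1)
    (hy0 : 0 ≤ y) (hy1 : y < 1) (hx : x = 1 - y)
    (hnum : 4*(m+2)^2 ≤ P)
    (hSdef : S = ε*(P - 2*y) + 2*y)
    (hmε : m*ε < 1)
    (hSub' : S * (1 - m*(ε/2)) ≤ 2)
    (hεub : ε*P ≤ 4*x) :
    ε*(P - m - 2) ≤ 2*x := by
  have hmε0 : 0 ≤ m*ε := mul_nonneg (by linarith) hε0.le
  have hxε : ε*x = ε - ε*y := by rw [hx]; ring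
  have hf1 : (m+2)*m*ε ≤ P*ε := by
    have h0 : (m+2)*m ≤ P := by nlinarith [sq_nonneg m]
    exact mul_le_mul_of_nonneg_right h0 hε0.le
  have h7 : (m+2-2*y)*m*ε ≤ 4*x := by
    have h2 : 0 ≤ 2*y*(m*ε) := mul_nonneg (by linarith) hmε0
    nlinarith [hf1, hεub, h2]
  have step1 : 2 ≤ (2 + ε*(m+2-2*y)) * (1 - m*(ε/2)) := by
    have f3 : (m+2-2*y)*m*ε*ε ≤ 4*x*ε := mul_le_mul_of_nonneg_right h7 hε0.le
    nlinarith [f3, hxε]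
  have hmε2pos : 0 < 1 - m*(ε/2) := by linarith
  have step2 : S ≤ 2 + ε*(m+2-2*y) :=
    le_of_mul_le_mul_right (le_trans hSub' step1) hmε2pos
  linarith [step2]

lemma main_lb (m x y ε P S : ℝ) (hε0 : 0 < ε)
    (hx : x = 1 - y)
    (hSdef : S = ε*(P - 2*y) + 2*y)
    (hSlb : 2 + m*ε ≤ S) :
    2*x - 2*(ε*x) ≤ ε*(P - m - 2) := by
  have hxε : ε*x = ε - ε*y := by rw [hx]; ring
  linarith [hSlb, hxε]

lemma eps_lb_div (m x ε P L : ℝ) (hm : 15 ≤ m) (hx0 : 0 < x) (hε0 : 0 < ε)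
    (hPpos : 0 < P) (hLpos : 0 < L) (hL2 : P ≤ 2*L)
    (hεub : ε*P ≤ 4*x) (hεLlb : 2*x - 2*(ε*x) ≤ ε*L) :
    2*x/L - 4*(m+1)*x^2/P^2 ≤ ε := by
  rw [sub_le_iff_le_add, div_le_iff₀ hLpos]
  have hcL : 2*(ε*x) ≤ 4*(m+1)*x^2/P^2 * L := by
    rw [div_mul_eq_mul_div, le_div_iff₀ (by positivity)]
    have g1 : 2*x*P*(ε*P) ≤ 2*x*P*(4*x) :=
      mul_le_mul_of_nonneg_left hεub (by positivity)
    have g2 : 2*(m+1)*x^2*P ≤ 2*(m+1)*x^2*(2*L) :=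
      mul_le_mul_of_nonneg_left hL2 (mul_nonneg (by linarith : (0:ℝ) ≤ 2*(m+1)) (sq_nonneg x))
    have g3 : 0 ≤ (m - 3)*(x^2*P) :=
      mul_nonneg (by linarith) (by positivity)
    linarith [g1, g2, g3]
  linarith [hεLlb, hcL]

lemma eta_core (m x y ε P L S : ℝ) (hm : 15 ≤ m) (hε0 : 0 < ε)
    (hy0 : 0 < y) (hy1 : y < 1) (hx : x = 1 - y) (hx0 : 0 < x)
    (hPpos : 0 < P) (hnum : 4*(m+2)^2 ≤ P)
    (hLpos : 0 < L) (hL2 : P ≤ 2*L)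
    (hSpos : 0 < S) (hSlb : 2 + m*ε ≤ S) (hSub : S ≤ 2 + 2*m*ε)
    (hεub : ε*P ≤ 4*x) (hεLlb : 2*x - 2*(ε*x) ≤ ε*L) :
    2*y*(1-ε)*(L*P) ≤ (y*(L*P) - (m+2)*x*P + 4*(m+1)*x^2*L)*S := by
  have hm0 : (0:ℝ) ≤ m := by linarith
  have hmε0 : 0 ≤ m*ε := mul_nonneg hm0 hε0.le
  have hS2 : (m+2)*ε ≤ S - 2 + 2*ε := by nlinarith [hSlb]
  have hyLP : (0:ℝ) ≤ y*(L*P) := mul_nonneg hy0.le (mul_nonneg hLpos.le hPpos.le)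
  rcases le_or_gt ((m+2)*x*P - 4*(m+1)*x^2*L) 0 with hA | hA
  · have t1 : 0 ≤ y*(L*P)*(S-2+2*ε) :=
      mul_nonneg hyLP (by linarith)
    have t2 : ((m+2)*x*P - 4*(m+1)*x^2*L)*S ≤ 0 := by
      have := mul_le_mul_of_nonneg_right hA hSpos.le
      simpa using this
    nlinarith [t1, t2]
  · have hAS : ((m+2)*x*P - 4*(m+1)*x^2*L)*S ≤ ((m+2)*x*P - 4*(m+1)*x^2*L)*(2+2*m*ε) :=
      mul_le_mul_of_nonneg_left hSub hA.le
    have f5 : 0 ≤ (m+1)*x^2*L*(m*ε) :=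
      mul_nonneg (mul_nonneg (mul_nonneg (by linarith) (sq_nonneg x)) hLpos.le) hmε0
    have c1 : ((m+2)*x*P - 4*(m+1)*x^2*L)*(2+2*m*ε) ≤ (m+2)*x*P*(2+2*m*ε) - 8*(m+1)*x^2*L := by
      linarith [f5]
    have c2 : 4*(m+1)*x^2*P ≤ 8*(m+1)*x^2*L := by
      have := mul_le_mul_of_nonneg_left hL2 (mul_nonneg (by linarith : (0:ℝ) ≤ 4*(m+1)) (sq_nonneg x))
      linarith [this]
    have εym : (y+m)*(ε*P) ≤ (1+m)*(4*x) := by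
      apply mul_le_mul (by linarith) hεub (mul_nonneg hε0.le hPpos.le) (by linarith)
    have g1 : (2*(m+2)*x)*((y+m)*(ε*P)) ≤ (2*(m+2)*x)*((1+m)*(4*x)) :=
      mul_le_mul_of_nonneg_left εym (mul_nonneg (by linarith : (0:ℝ) ≤ 2*(m+2)) hx0.le)
    have g2 : 0 ≤ (m*P - 4*(m+2)*(m+1))*x^2 := by
      apply mul_nonneg _ (sq_nonneg x)
      nlinarith [mul_nonneg (show (0:ℝ) ≤ m - 1 by linarith) hPpos.le, hnum]
    have g3 : x*y*P = (x - x^2)*P := by rw [hx]; ring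
    have g4 : m*(x*y*P) = m*((x - x^2)*P) := by rw [hx]; ring
    have c4P : (m+2)*x*P*(2+2*m*ε) - 4*(m+1)*x^2*P ≤ (m+2)*y*P*(2*x - 2*(ε*x)) := by
      linarith [g1, g2, g3, g4]
    have c3 : (m+2)*y*P*(2*x - 2*(ε*x)) ≤ (m+2)*y*P*(ε*L) :=
      mul_le_mul_of_nonneg_left hεLlb (mul_nonneg (mul_nonneg (by linarith : (0:ℝ) ≤ m+2) hy0.le) hPpos.le)
    have cB : y*(L*P)*((m+2)*ε) ≤ y*(L*P)*(S-2+2*ε) :=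
      mul_le_mul_of_nonneg_left hS2 hyLP
    nlinarith [hAS, c1, c2, c4P, c3, cB]

set_option maxHeartbeats 1000000 in
theorem eps_eta_estimates :
    ∃ k0 : ℕ, ∀ k : ℕ, k0 ≤ k → ∀ y : ℝ, 0 ≤ y → y < 1 →
      ∀ u0 γ0 η0 : ℝ, u0 = y * ((2:ℝ)^k)⁻¹ →
        0 < γ0 → γ0 < 1 → 0 < η0 → η0 < 1 →
        1 - η0 = (1 - γ0^2) * (1 + γ0^2)^(k-1) →
        u0 = η0 / ((1 + γ0^2)^k - (1 - η0)) →
        (2*(1-y)/((2:ℝ)^k - k - 1) - 4*k*(1-y)^2/(2:ℝ)^(2*k) ≤ 1 - γ0^2 ∧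
          1 - γ0^2 ≤ 2*(1-y)/((2:ℝ)^k - k - 1)) ∧
        η0 ≤ min y (y - (k+1)*(1-y)/((2:ℝ)^k - k - 1) + 4*k*(1-y)^2/(2:ℝ)^k) := by
  use 16
  intro k hk y hy0 hy1 u0 γ0 η0 hu0 hγ0 hγ1 hη0 hη1 h1 h2
  obtain ⟨m, rfl⟩ : ∃ m, k = m + 1 := ⟨k - 1, by omega⟩
  have hm : 15 ≤ m := by omega
  have hmR : (15:ℝ) ≤ (m:ℝ) := by exact_mod_cast hm
  set ε : ℝ := 1 - γ0^2 with hεdef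
  clear_value ε
  have hε0 : 0 < ε := by nlinarith
  have hε1 : ε < 1 := by nlinarith
  have h1ε : 0 < 1 - ε := by linarith
  have hγε : 1 + γ0^2 = 2 - ε := by rw [hεdef]; ring
  rw [hγε] at h1 h2
  simp only [Nat.add_sub_cancel] at h1
  clear hγ0 hγ1 hγε hεdef hη1 hk
  -- basic quantities
  set P : ℝ := 2^(m+1) with hPdef
  have hPpos : (0:ℝ) < P := by rw [hPdef]; positivity
  have hP2m : P = 2 * 2^m := by rw [hPdef, pow_succ]; ring
  have h2mpos : (0:ℝ) < 2^m := by positivity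
  have hnum : 4*((m:ℝ)+2)^2 ≤ P := by
    have h' := pow_big m hm
    rw [hPdef]
    exact_mod_cast h'
  set Q : ℝ := (2 - ε)^m with hQdef
  have h2ε0 : (0:ℝ) < 2 - ε := by linarith
  have hQpos : 0 < Q := by rw [hQdef]; exact pow_pos h2ε0 m
  have hηQ : η0 = 1 - ε * Q := by linarith [h1]
  have hD : (2-ε)^(m+1) - (1 - η0) = 2*(1-ε)*Q := by
    rw [pow_succ, hηQ, hQdef]; ring
  have hDpos : 0 < 2*(1-ε)*Q := by positivity
  rw [hD] at h2
  clear_value P Q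
  have hηP : η0 * P = 2*y*(1-ε)*Q := by
    rw [hu0] at h2
    field_simp at h2
    linarith [h2]
  have hy0' : 0 < y := by
    nlinarith [mul_pos hη0 hPpos, mul_pos h1ε hQpos]
  clear hu0 h2 hD hDpos h1
  set x : ℝ := 1 - y with hxdef
  clear_value x
  have hx0 : 0 < x := by rw [hxdef]; linarith
  set S : ℝ := ε*(P - 2*y) + 2*y with hSdef
  clear_value S
  have hSQ : Q * S = P := by
    rw [hSdef]; linear_combination (P : ℝ) * hηQ - hηP
  -- Bernoulli-type bounds on Q
  have hQub : Q ≤ 2^m := by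
    rw [hQdef]
    exact pow_le_pow_left₀ (by linarith) (by linarith) m
  have hbase : (2 - ε) = 2 * (1 - ε/2) := by ring
  have hQsplit : Q = 2^m * (1 - ε/2)^m := by
    rw [hQdef, hbase, mul_pow]
  have hQlb1 : (2:ℝ)^m * (1 - (m:ℝ)*(ε/2)) ≤ Q := by
    have hb := one_add_mul_le_pow (a := -(ε/2)) (by linarith) m
    have he : ((1:ℝ) + -(ε/2))^m = (1 - ε/2)^m := by congr 1
    rw [he] at hb
    have hb' : 1 - (m:ℝ)*(ε/2) ≤ (1 - ε/2)^m := by linarith [hb]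
    rw [hQsplit]
    exact mul_le_mul_of_nonneg_left hb' h2mpos.le
  have hQub2 : Q * (1 + (m:ℝ)*(ε/2)) ≤ 2^m := by
    have hb := bern_aux (ε/2) (by linarith) (by linarith) m
    rw [hQsplit]
    calc 2^m * (1 - ε/2)^m * (1 + (m:ℝ)*(ε/2))
        = 2^m * ((1 - ε/2)^m * (1 + (m:ℝ)*(ε/2))) := by ring
      _ ≤ 2^m * 1 := mul_le_mul_of_nonneg_left hb h2mpos.le
      _ = 2^m := by ring
  have hQlb3 : 1 + (m:ℝ)*(1-ε) ≤ Q := by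
    have hb := one_add_mul_le_pow (a := 1 - ε) (by linarith) m
    have he : ((1:ℝ) + (1 - ε))^m = (2 - ε)^m := by congr 1; ring
    rw [he] at hb
    rw [hQdef]; exact hb
  -- a priori: m ε < 1
  have hmε : (m:ℝ) * ε < 1 := by
    have hεQ : ε * Q < 1 := by linarith [hηQ]
    have h3 : ε * (1 + (m:ℝ)*(1-ε)) ≤ ε * Q := mul_le_mul_of_nonneg_left hQlb3 hε0.le
    by_contra hcon
    push_neg at hcon
    nlinarith [mul_nonneg (by linarith : (0:ℝ) ≤ 1 - ε) (by linarith : (0:ℝ) ≤ (m:ℝ)*ε - 1)]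
  have hmε0 : (0:ℝ) ≤ (m:ℝ)*ε := by positivity
  -- S bounds
  have hSlb : 2 + (m:ℝ)*ε ≤ S := by
    have step : Q * (2 + (m:ℝ)*ε) ≤ Q * S := by
      calc Q * (2 + (m:ℝ)*ε) = 2*(Q * (1 + (m:ℝ)*(ε/2))) := by ring
        _ ≤ 2*2^m := by linarith
        _ = P := by rw [hP2m]
        _ = Q * S := hSQ.symm
    exact le_of_mul_le_mul_left step hQpos
  have hSpos : 0 < S := by linarith
  have hSub' : S * (1 - (m:ℝ)*(ε/2)) ≤ 2 := by
    have step := mul_le_mul_of_nonneg_left hQlb1 hSpos.le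
    have step2 : (2:ℝ)^m * (S * (1 - (m:ℝ)*(ε/2))) ≤ 2^m * 2 := by
      calc (2:ℝ)^m * (S * (1 - (m:ℝ)*(ε/2))) = S * (2^m * (1 - (m:ℝ)*(ε/2))) := by ring
        _ ≤ S * Q := step
        _ = P := by rw [mul_comm]; exact hSQ
        _ = 2^m * 2 := by rw [hP2m]; ring
    exact le_of_mul_le_mul_left step2 h2mpos
  have hmε2pos : 0 < 1 - (m:ℝ)*(ε/2) := by linarith
  have hSub : S ≤ 2 + 2*(m:ℝ)*ε := by
    have h9 : (2:ℝ) ≤ (2 + 2*(m:ℝ)*ε)*(1 - (m:ℝ)*(ε/2)) := by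
      nlinarith [mul_nonneg hmε0 (by linarith : (0:ℝ) ≤ 1 - (m:ℝ)*ε)]
    exact le_of_mul_le_mul_right (by linarith [hSub']) hmε2pos
  -- key bounds via the auxiliary lemmas
  have hεub : ε * P ≤ 4 * x :=
    crude_ub (m:ℝ) x y ε P S hmR hε0 hy0 hy1 hxdef hnum hSdef hSub
  have hεLub : ε*(P - (m:ℝ) - 2) ≤ 2*x :=
    main_ub (m:ℝ) x y ε P S hmR hε0 hε1 hy0 hy1 hxdef hnum hSdef hmε hSub' hεub
  clear hQlb1 hQub2 hQlb3 hQsplit hbase hSub' hmε2pos h2mpos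
  have hεLlb : 2*x - 2*(ε*x) ≤ ε*(P - (m:ℝ) - 2) :=
    main_lb (m:ℝ) x y ε P S hε0 hxdef hSdef hSlb
  have hLpos : (0:ℝ) < P - (m:ℝ) - 2 := by nlinarith [sq_nonneg (m:ℝ)]
  have hL2 : P ≤ 2*(P - (m:ℝ) - 2) := by nlinarith [sq_nonneg (m:ℝ)]
  -- now the goals
  push_cast
  refine ⟨⟨?_, ?_⟩, ?_⟩
  · have hP2 : (2:ℝ)^(2*(m+1)) = P^2 := by
      rw [hPdef, ← pow_mul]
      congr 1
      omega
    have hLe : P - ((m:ℝ) + 1) - 1 = P - (m:ℝ) - 2 := by ring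
    rw [hP2, hLe]
    exact eps_lb_div (m:ℝ) x ε P (P - (m:ℝ) - 2) hmR hx0 hε0 hPpos hLpos hL2 hεub hεLlb
  · have hLe : P - ((m:ℝ) + 1) - 1 = P - (m:ℝ) - 2 := by ring
    rw [hLe, le_div_iff₀ hLpos]
    exact hεLub
  · rw [le_min_iff]
    constructor
    · have h8 : 2*(1-ε)*Q ≤ P := by
        have h9 : 0 ≤ ε*Q := mul_nonneg hε0.le hQpos.le
        linarith [hQub, h9, hP2m]
      have h9 : η0 * P ≤ y * P := by
        have h10 := mul_le_mul_of_nonneg_left h8 hy0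
        linarith [hηP, h10]
      exact le_of_mul_le_mul_right h9 hPpos
    · have hηS : η0 * S = 2*y*(1-ε) := by
        have h10 : η0 * S * Q = 2*y*(1-ε) * Q := by
          calc η0 * S * Q = η0 * (Q*S) := by ring
            _ = η0 * P := by rw [hSQ]
            _ = 2*y*(1-ε)*Q := hηP
        exact mul_right_cancel₀ (ne_of_gt hQpos) h10
      set L : ℝ := P - ((m:ℝ)+1) - 1 with hLdef
      have hLeq : L = P - (m:ℝ) - 2 := by rw [hLdef]; ring
      have hLpos' : 0 < L := by rw [hLeq]; exact hLpos
      have hkey := eta_core (m:ℝ) x y ε P L S hmR hε0 hy0' hy1 hxdef hx0 hPpos hnum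
        hLpos' (by rw [hLeq]; exact hL2) hSpos hSlb hSub hεub (by rw [hLeq]; exact hεLlb)
      have hSLPpos : 0 < S*(L*P) := mul_pos hSpos (mul_pos hLpos' hPpos)
      have hT : (y - ((m:ℝ)+1+1)*x/L + 4*((m:ℝ)+1)*x^2/P) * (S*(L*P))
          = (y*(L*P) - ((m:ℝ)+2)*x*P + 4*((m:ℝ)+1)*x^2*L)*S := by
        field_simp
        ring
      have hm1 : η0 * (S*(L*P)) ≤ (y - ((m:ℝ)+1+1)*x/L + 4*((m:ℝ)+1)*x^2/P) * (S*(L*P)) := by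
        rw [hT]
        calc η0 * (S*(L*P)) = (η0*S)*(L*P) := by ring
          _ = 2*y*(1-ε)*(L*P) := by rw [hηS]
          _ ≤ _ := hkey
      exact le_of_mul_le_mul_right hm1 hSLPpos
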